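/- Let p_λ(x₁,x₂) = (1−λ)p₀(x₁)p₀(x₂) + λp₁(x₁,x₂) where the support of p₁ is contained in the support of p₀(x₁)p₀(x₂). Then lim_{λ→0⁺} I_λ(X₁;X₂)/λ² = K₁, where K₁ = (1/(2 ln 2))·[χ²(p₁(x₁,x₂), p₀(x₁)p₀(x₂)) − χ²(p₁(x₁), p₀(x₁)) − χ²(p₁(x₂), p₀(x₂))], and K₁ ≥ 0. -/

import Mathlib

open scoped BigOperators Classical

/-- Kullback–Leibler divergence `D(p‖q)` (base-2 logarithm) on a finite alphabet. -/
noncomputable def klDiv {α : Type*} [Fintype α] (p q : α → ℝ) : ℝ :=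
  ∑ x, p x * Real.logb 2 (p x / q x)

/-- First marginal of a joint pmf. -/
noncomputable def marg₁ {α β : Type*} [Fintype β] (q : α × β → ℝ) (x : α) : ℝ :=
  ∑ y, q (x, y)

/-- Second marginal of a joint pmf. -/
noncomputable def marg₂ {α β : Type*} [Fintype α] (q : α × β → ℝ) (y : β) : ℝ :=
  ∑ x, q (x, y)

/-- Mutual information (base-2 logarithm) of a joint pmf on `α × β`. -/
noncomputable def miOfJoint {α β : Type*} [Fintype α] [Fintype β] (q : α × β → ℝ) : ℝ :=
  ∑ x, ∑ y, q (x, y) * Real.logb 2 (q (x, y) / (marg₁ q x * marg₂ q y))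

/-- Chi-squared divergence `χ²(p,q)` on a finite alphabet. -/
noncomputable def chiSq {α : Type*} [Fintype α] (p q : α → ℝ) : ℝ :=
  ∑ x, (p x - q x) ^ 2 / q x

/-- `p` is a probability mass function on the finite type `Ω`. -/
def IsPmf {Ω : Type*} [Fintype Ω] (p : Ω → ℝ) : Prop :=
  (∀ ω, 0 ≤ p ω) ∧ ∑ ω, p ω = 1


open Filter Set


lemma aux_log_slope :
    Tendsto (fun u : ℝ => Real.log (1 + u) / u) (nhdsWithin 0 {(0:ℝ)}ᶜ) (nhds 1) := by
  have h : HasDerivAt (fun u : ℝ => Real.log (1 + u)) 1 0 := by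
    have h1 : HasDerivAt (fun u : ℝ => 1 + u) 1 0 := by
      simpa using (hasDerivAt_id (0:ℝ)).const_add 1
    have h2 := (Real.hasDerivAt_log (by norm_num : (1:ℝ) + 0 ≠ 0)).comp 0 h1
    simp only [add_zero, inv_one, mul_one] at h2
    exact h2
  have := hasDerivAt_iff_tendsto_slope.mp h
  refine this.congr (fun u => ?_)
  simp [slope_def_field]

lemma phi_tendsto :
    Tendsto (fun u : ℝ => ((1 + u) * Real.log (1 + u) - u) / u ^ 2)
      (nhdsWithin 0 {(0:ℝ)}ᶜ) (nhds (1/2)) := by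
  have hmem : Ioo (-(1:ℝ)/2) (1/2) ∈ nhdsWithin (0:ℝ) {(0:ℝ)}ᶜ :=
    nhdsWithin_le_nhds (Ioo_mem_nhds (by norm_num) (by norm_num))
  apply HasDerivAt.lhopital_zero_nhdsNE
    (f' := fun u : ℝ => Real.log (1 + u)) (g' := fun u : ℝ => 2 * u)
  · filter_upwards [hmem] with u hu
    have hpos : (0:ℝ) < 1 + u := by cases hu; linarith
    have h1 : HasDerivAt (fun v : ℝ => 1 + v) 1 u := by
      simpa using (hasDerivAt_id u).const_add 1
    have hlog : HasDerivAt (fun v : ℝ => Real.log (1 + v)) (1/(1+u)) u := by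
      have := (Real.hasDerivAt_log hpos.ne').comp u h1
      simp only [mul_one] at this
      rw [one_div]
      exact this
    have hmul := h1.mul hlog
    have := hmul.sub (hasDerivAt_id u)
    refine this.congr_deriv ?_
    show _ = Real.log (1 + u)
    rw [mul_one_div_cancel hpos.ne']
    ring
  · filter_upwards with u
    simpa using hasDerivAt_pow 2 u
  · filter_upwards [self_mem_nhdsWithin] with u hu
    simpa using hu
  · have hc : ContinuousAt (fun u : ℝ => (1 + u) * Real.log (1 + u) - u) 0 := by
      have : ContinuousAt (fun u : ℝ => Real.log (1 + u)) 0 :=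
        (Real.continuousAt_log (by norm_num)).comp (by fun_prop)
      exact ((continuousAt_const.add continuousAt_id).mul this).sub continuousAt_id
    have := hc.tendsto.mono_left (nhdsWithin_le_nhds (s := {(0:ℝ)}ᶜ))
    simpa using this
  · have : Tendsto (fun u : ℝ => u ^ 2) (nhds 0) (nhds 0) := by
      simpa using (continuous_pow 2).tendsto (0:ℝ)
    exact this.mono_left (nhdsWithin_le_nhds (s := {(0:ℝ)}ᶜ))
  · have := aux_log_slope.div_const 2
    refine this.congr (fun u => ?_)
    rw [div_div, mul_comm]


lemma term_tendsto (q p : ℝ) (hq : 0 ≤ q) (hq0 : q = 0 → p = 0) :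
    Tendsto (fun l : ℝ =>
        ((q + l * (p - q)) * Real.log ((q + l * (p - q)) / q) - l * (p - q)) / l ^ 2)
      (nhdsWithin 0 (Ioi 0)) (nhds ((p - q) ^ 2 / (2 * q))) := by
  rcases eq_or_lt_of_le hq with h0 | hqpos
  · -- q = 0, p = 0
    have hp : p = 0 := hq0 h0.symm
    subst hp
    rw [← h0]
    simpa using tendsto_const_nhds
  set t := p - q with ht
  rcases eq_or_ne t 0 with h0 | hne
  · rw [h0]
    have : ∀ l : ℝ, ((q + l * 0) * Real.log ((q + l * 0) / q) - l * 0) / l ^ 2 = 0 := by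
      intro l
      rw [mul_zero, add_zero, div_self hqpos.ne', Real.log_one]
      simp
    simp only [this]
    simpa using tendsto_const_nhds
  -- t ≠ 0 case
  have hqne := hqpos.ne'
  have hcomp : Tendsto (fun l : ℝ => l * t / q) (nhdsWithin 0 (Ioi 0))
      (nhdsWithin 0 {(0:ℝ)}ᶜ) := by
    apply tendsto_nhdsWithin_of_tendsto_nhds_of_eventually_within
    · have : Tendsto (fun l : ℝ => l * t / q) (nhds 0) (nhds (0 * t / q)) :=
        (tendsto_id.mul_const t).div_const q
      simpa using this.mono_left (nhdsWithin_le_nhds (s := Ioi (0:ℝ)))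
    · filter_upwards [self_mem_nhdsWithin] with l hl
      have hl0 : l ≠ 0 := ne_of_gt hl
      simp only [Set.mem_compl_iff, Set.mem_singleton_iff]
      exact div_ne_zero (mul_ne_zero hl0 hne) hqne
  have hmain := (phi_tendsto.comp hcomp).mul_const (t ^ 2 / q)
  have hval : (1:ℝ)/2 * (t ^ 2 / q) = t ^ 2 / (2 * q) := by ring
  rw [hval] at hmain
  refine hmain.congr' ?_
  filter_upwards [self_mem_nhdsWithin] with l hl
  have hl0 : l ≠ 0 := ne_of_gt hl
  have harg : (q + l * t) / q = 1 + l * t / q := by field_simp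
  rw [Function.comp_apply, harg]
  set L := Real.log (1 + l * t / q) with hL
  field_simp

lemma klDiv_mix_tendsto {α : Type*} [Fintype α] (p q : α → ℝ)
    (hp : IsPmf p) (hq : IsPmf q) (hsupp : ∀ x, q x = 0 → p x = 0) :
    Tendsto (fun l : ℝ => klDiv (fun x => (1 - l) * q x + l * p x) q / l ^ 2)
      (nhdsWithin 0 (Ioi 0)) (nhds ((1 / (2 * Real.log 2)) * chiSq p q)) := by
  have hsum : ∑ x, (p x - q x) = 0 := by
    rw [Finset.sum_sub_distrib, hp.2, hq.2, sub_self]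
  have heq : ∀ l : ℝ, klDiv (fun x => (1 - l) * q x + l * p x) q / l ^ 2 =
      (∑ x, ((q x + l * (p x - q x)) * Real.log ((q x + l * (p x - q x)) / q x)
        - l * (p x - q x)) / l ^ 2) / Real.log 2 := by
    intro l
    have hR : ∑ x, ((q x + l * (p x - q x)) * Real.log ((q x + l * (p x - q x)) / q x)
        - l * (p x - q x)) / l ^ 2
        = (∑ x, (q x + l * (p x - q x)) * Real.log ((q x + l * (p x - q x)) / q x)) / l ^ 2 := by
      rw [← Finset.sum_div, Finset.sum_sub_distrib, ← Finset.mul_sum, hsum, mul_zero, sub_zero]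
    rw [hR]
    have hL : klDiv (fun x => (1 - l) * q x + l * p x) q
        = (∑ x, (q x + l * (p x - q x)) * Real.log ((q x + l * (p x - q x)) / q x))
          / Real.log 2 := by
      unfold klDiv
      rw [Finset.sum_div]
      refine Finset.sum_congr rfl (fun x _ => ?_)
      have hpt : (1 - l) * q x + l * p x = q x + l * (p x - q x) := by ring
      simp only []
      rw [hpt, Real.logb, mul_div_assoc]
    rw [hL, div_div, div_div, mul_comm]
  simp only [heq]
  have h2 : Tendsto (fun l : ℝ => ∑ x, ((q x + l * (p x - q x)) *
      Real.log ((q x + l * (p x - q x)) / q x) - l * (p x - q x)) / l ^ 2)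
      (nhdsWithin 0 (Ioi 0)) (nhds (∑ x, (p x - q x) ^ 2 / (2 * q x))) :=
    tendsto_finset_sum _ (fun x _ => term_tendsto (q x) (p x) (hq.1 x) (hsupp x))
  have h3 := h2.div_const (Real.log 2)
  have hval : (∑ x, (p x - q x) ^ 2 / (2 * q x)) / Real.log 2
      = (1 / (2 * Real.log 2)) * chiSq p q := by
    rw [chiSq, Finset.mul_sum, Finset.sum_div]
    refine Finset.sum_congr rfl (fun x _ => ?_)
    ring
  rwa [hval] at h3

lemma klDiv_nonneg {α : Type*} [Fintype α] (p q : α → ℝ)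
    (hp0 : ∀ x, 0 ≤ p x) (hq0 : ∀ x, 0 ≤ q x)
    (hsum : ∑ x, p x = ∑ x, q x) (hsupp : ∀ x, q x = 0 → p x = 0) :
    0 ≤ klDiv p q := by
  have key : ∀ x, p x - q x ≤ p x * Real.log (p x / q x) := by
    intro x
    rcases eq_or_lt_of_le (hp0 x) with h0 | hp
    · rw [← h0]; simpa using hq0 x
    · have hqpos : 0 < q x := by
        rcases eq_or_lt_of_le (hq0 x) with h0 | h; · exact absurd (hsupp x h0.symm) (ne_of_gt hp)
        · exact h
      have hlog := Real.log_le_sub_one_of_pos (div_pos hqpos hp)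
      have hrw : Real.log (q x / p x) = - Real.log (p x / q x) := by
        rw [Real.log_div hqpos.ne' hp.ne', Real.log_div hp.ne' hqpos.ne']; ring
      rw [hrw] at hlog
      have h2 := mul_le_mul_of_nonneg_left hlog (hp0 x)
      have h3 : p x * (q x / p x - 1) = q x - p x := by field_simp
      rw [h3] at h2
      linarith
  have h1 : 0 ≤ ∑ x, p x * Real.log (p x / q x) := by
    have := Finset.sum_le_sum (s := Finset.univ) (fun x _ => key x)
    rw [Finset.sum_sub_distrib, hsum, sub_self] at this
    exact this
  unfold klDiv
  have : ∑ x, p x * Real.logb 2 (p x / q x)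
      = (∑ x, p x * Real.log (p x / q x)) / Real.log 2 := by
    rw [Finset.sum_div]
    exact Finset.sum_congr rfl (fun x _ => by rw [Real.logb, mul_div_assoc])
  rw [this]
  exact div_nonneg h1 (Real.log_nonneg (by norm_num))

/-- As `λ → 0⁺`, auxiliary docstring replaced -/
theorem mutualInfo_mixture_div_sq_tendsto {𝒳₁ 𝒳₂ : Type*} [Fintype 𝒳₁] [Fintype 𝒳₂]
    (p₀₁ : 𝒳₁ → ℝ) (p₀₂ : 𝒳₂ → ℝ) (p₁ : 𝒳₁ × 𝒳₂ → ℝ)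
    (h₀₁ : IsPmf p₀₁) (h₀₂ : IsPmf p₀₂) (h₁ : IsPmf p₁)
    (hsupp : ∀ x₁ x₂, p₀₁ x₁ * p₀₂ x₂ = 0 → p₁ (x₁, x₂) = 0) :
    Filter.Tendsto
      (fun lam : ℝ =>
        miOfJoint (fun z : 𝒳₁ × 𝒳₂ => (1 - lam) * (p₀₁ z.1 * p₀₂ z.2) + lam * p₁ z) / lam ^ 2)
      (nhdsWithin 0 (Set.Ioi 0))
      (nhds ((1 / (2 * Real.log 2)) *
        (chiSq p₁ (fun z : 𝒳₁ × 𝒳₂ => p₀₁ z.1 * p₀₂ z.2)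
          - chiSq (marg₁ p₁) p₀₁ - chiSq (marg₂ p₁) p₀₂)))
    ∧ 0 ≤ (1 / (2 * Real.log 2)) *
        (chiSq p₁ (fun z : 𝒳₁ × 𝒳₂ => p₀₁ z.1 * p₀₂ z.2)
          - chiSq (marg₁ p₁) p₀₁ - chiSq (marg₂ p₁) p₀₂) := by
  set q₀ : 𝒳₁ × 𝒳₂ → ℝ := fun z => p₀₁ z.1 * p₀₂ z.2 with hq₀def
  set pl : ℝ → 𝒳₁ × 𝒳₂ → ℝ := fun l z => (1 - l) * q₀ z + l * p₁ z with hpldef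
  -- basic facts
  have hq₀pmf : IsPmf q₀ := by
    constructor
    · intro z; exact mul_nonneg (h₀₁.1 z.1) (h₀₂.1 z.2)
    · rw [hq₀def, Fintype.sum_prod_type]
      have : ∀ x : 𝒳₁, ∑ y, p₀₁ x * p₀₂ y = p₀₁ x := by
        intro x; rw [← Finset.mul_sum, h₀₂.2, mul_one]
      simp only [this]
      exact h₀₁.2
  have hsupp' : ∀ z : 𝒳₁ × 𝒳₂, q₀ z = 0 → p₁ z = 0 := fun z hz => hsupp z.1 z.2 hz
  have hm₁pmf : IsPmf (marg₁ p₁) := by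
    refine ⟨fun x => Finset.sum_nonneg (fun y _ => h₁.1 (x, y)), ?_⟩
    rw [← h₁.2, Fintype.sum_prod_type]; rfl
  have hm₂pmf : IsPmf (marg₂ p₁) := by
    refine ⟨fun y => Finset.sum_nonneg (fun x _ => h₁.1 (x, y)), ?_⟩
    rw [← h₁.2, Fintype.sum_prod_type]
    exact Finset.sum_comm
  have hsupp₁ : ∀ x, p₀₁ x = 0 → marg₁ p₁ x = 0 :=
    fun x hx => Finset.sum_eq_zero (fun y _ => hsupp x y (by rw [hx, zero_mul]))
  have hsupp₂ : ∀ y, p₀₂ y = 0 → marg₂ p₁ y = 0 :=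
    fun y hy => Finset.sum_eq_zero (fun x _ => hsupp x y (by rw [hy, mul_zero]))
  -- nonnegativity of the mixture
  have hf0 : ∀ l ∈ Ioo (0:ℝ) 1, ∀ z, 0 ≤ pl l z := by
    intro l hl z
    exact add_nonneg (mul_nonneg (by linarith [hl.2]) (hq₀pmf.1 z))
      (mul_nonneg hl.1.le (h₁.1 z))
  -- marginals of the mixture
  have hmarg₁ : ∀ (l : ℝ) x, marg₁ (pl l) x = (1 - l) * p₀₁ x + l * marg₁ p₁ x := by
    intro l x
    show ∑ y, ((1 - l) * q₀ (x, y) + l * p₁ (x, y)) = _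
    rw [Finset.sum_add_distrib]
    congr 1
    · have h : ∀ y, (1 - l) * q₀ (x, y) = ((1 - l) * p₀₁ x) * p₀₂ y := by
        intro y; show (1 - l) * (p₀₁ x * p₀₂ y) = _; ring
      simp only [h]
      rw [← Finset.mul_sum, h₀₂.2, mul_one]
    · rw [← Finset.mul_sum]; rfl
  have hmarg₂ : ∀ (l : ℝ) y, marg₂ (pl l) y = (1 - l) * p₀₂ y + l * marg₂ p₁ y := by
    intro l y
    show ∑ x, ((1 - l) * q₀ (x, y) + l * p₁ (x, y)) = _
    rw [Finset.sum_add_distrib]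
    congr 1
    · have h : ∀ x, (1 - l) * q₀ (x, y) = ((1 - l) * p₀₂ y) * p₀₁ x := by
        intro x; show (1 - l) * (p₀₁ x * p₀₂ y) = _; ring
      simp only [h]
      rw [← Finset.mul_sum, h₀₁.2, mul_one]
    · rw [← Finset.mul_sum]; rfl
  -- sum of the mixture
  have hsuml : ∀ l : ℝ, ∑ z, pl l z = 1 := by
    intro l
    show ∑ z, ((1 - l) * q₀ z + l * p₁ z) = 1
    rw [Finset.sum_add_distrib, ← Finset.mul_sum, ← Finset.mul_sum, hq₀pmf.2, h₁.2]
    ring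
  -- decomposition of mutual information for l ∈ Ioo 0 1
  have hdecomp : ∀ l ∈ Ioo (0:ℝ) 1, miOfJoint (pl l)
      = klDiv (pl l) q₀ - klDiv (marg₁ (pl l)) p₀₁ - klDiv (marg₂ (pl l)) p₀₂ := by
    intro l hl
    obtain ⟨hl0, hl1⟩ := hl
    have hf0l := hf0 l ⟨hl0, hl1⟩
    -- pointwise identity
    have hpoint : ∀ x y,
        pl l (x, y) * Real.logb 2 (pl l (x, y) / (marg₁ (pl l) x * marg₂ (pl l) y))
        = pl l (x, y) * Real.logb 2 (pl l (x, y) / q₀ (x, y))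
          + pl l (x, y) * Real.logb 2 (p₀₁ x / marg₁ (pl l) x)
          + pl l (x, y) * Real.logb 2 (p₀₂ y / marg₂ (pl l) y) := by
      intro x y
      rcases eq_or_lt_of_le (hf0l (x, y)) with hz | hz
      · rw [← hz]; ring
      · have hq₀ne : q₀ (x, y) ≠ 0 := by
          intro h
          have hp1 := hsupp' _ h
          have : pl l (x, y) = 0 := by
            show (1 - l) * q₀ (x, y) + l * p₁ (x, y) = 0
            rw [h, hp1]; ring
          exact hz.ne' this
        have hq₀pos : 0 < q₀ (x, y) := lt_of_le_of_ne (hq₀pmf.1 (x, y)) (Ne.symm hq₀ne)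
        have h01pos : 0 < p₀₁ x := by
          rcases eq_or_lt_of_le (h₀₁.1 x) with h | h
          · exfalso; apply hq₀ne; show p₀₁ x * p₀₂ y = 0; rw [← h, zero_mul]
          · exact h
        have h02pos : 0 < p₀₂ y := by
          rcases eq_or_lt_of_le (h₀₂.1 y) with h | h
          · exfalso; apply hq₀ne; show p₀₁ x * p₀₂ y = 0; rw [← h, mul_zero]
          · exact h
        have hm1pos : 0 < marg₁ (pl l) x := by
          rw [hmarg₁]
          have := hm₁pmf.1 x
          nlinarith
        have hm2pos : 0 < marg₂ (pl l) y := by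
          rw [hmarg₂]
          have := hm₂pmf.1 y
          nlinarith
        have hsplit : q₀ (x, y) = p₀₁ x * p₀₂ y := rfl
        rw [Real.logb_div hz.ne' (by positivity),
            Real.logb_mul hm1pos.ne' hm2pos.ne',
            Real.logb_div hz.ne' hq₀ne,
            Real.logb_div h01pos.ne' hm1pos.ne',
            Real.logb_div h02pos.ne' hm2pos.ne',
            hsplit, Real.logb_mul h01pos.ne' h02pos.ne']
        ring
    have hS1 : ∑ x, ∑ y, pl l (x, y) * Real.logb 2 (pl l (x, y) / q₀ (x, y))
        = klDiv (pl l) q₀ := by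
      rw [klDiv, Fintype.sum_prod_type]
    have hS2 : ∑ x, ∑ y, pl l (x, y) * Real.logb 2 (p₀₁ x / marg₁ (pl l) x)
        = - klDiv (marg₁ (pl l)) p₀₁ := by
      rw [klDiv, ← Finset.sum_neg_distrib]
      refine Finset.sum_congr rfl (fun x _ => ?_)
      rw [← Finset.sum_mul]
      have hm : ∑ y, pl l (x, y) = marg₁ (pl l) x := rfl
      rw [hm, show p₀₁ x / marg₁ (pl l) x = (marg₁ (pl l) x / p₀₁ x)⁻¹ from
        (inv_div _ _).symm, Real.logb_inv]
      ring
    have hS3 : ∑ x, ∑ y, pl l (x, y) * Real.logb 2 (p₀₂ y / marg₂ (pl l) y)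
        = - klDiv (marg₂ (pl l)) p₀₂ := by
      rw [Finset.sum_comm, klDiv, ← Finset.sum_neg_distrib]
      refine Finset.sum_congr rfl (fun y _ => ?_)
      rw [← Finset.sum_mul]
      have hm : ∑ x, pl l (x, y) = marg₂ (pl l) y := rfl
      rw [hm, show p₀₂ y / marg₂ (pl l) y = (marg₂ (pl l) y / p₀₂ y)⁻¹ from
        (inv_div _ _).symm, Real.logb_inv]
      ring
    unfold miOfJoint
    simp only [hpoint, Finset.sum_add_distrib]
    rw [hS1, hS2, hS3]
    ring
  -- main tendsto
  have T₀ := klDiv_mix_tendsto p₁ q₀ h₁ hq₀pmf hsupp'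
  have T₁ := klDiv_mix_tendsto (marg₁ p₁) p₀₁ hm₁pmf h₀₁ hsupp₁
  have T₂ := klDiv_mix_tendsto (marg₂ p₁) p₀₂ hm₂pmf h₀₂ hsupp₂
  have Tmain := (T₀.sub T₁).sub T₂
  have hval : (1/(2*Real.log 2)) * chiSq p₁ q₀ - (1/(2*Real.log 2)) * chiSq (marg₁ p₁) p₀₁
      - (1/(2*Real.log 2)) * chiSq (marg₂ p₁) p₀₂
      = (1/(2*Real.log 2)) * (chiSq p₁ q₀ - chiSq (marg₁ p₁) p₀₁ - chiSq (marg₂ p₁) p₀₂) := by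
    ring
  rw [hval] at Tmain
  have hTend : Tendsto (fun l : ℝ => miOfJoint (pl l) / l ^ 2) (nhdsWithin 0 (Ioi 0))
      (nhds ((1/(2*Real.log 2)) *
        (chiSq p₁ q₀ - chiSq (marg₁ p₁) p₀₁ - chiSq (marg₂ p₁) p₀₂))) := by
    refine Tmain.congr' ?_
    filter_upwards [Ioo_mem_nhdsGT_of_mem (by norm_num : (0:ℝ) ∈ Ico 0 1)] with l hl
    have hm1 : marg₁ (pl l) = fun x => (1 - l) * p₀₁ x + l * marg₁ p₁ x := funext (hmarg₁ l)
    have hm2 : marg₂ (pl l) = fun y => (1 - l) * p₀₂ y + l * marg₂ p₁ y := funext (hmarg₂ l)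
    rw [hdecomp l hl, hm1, hm2, sub_div, sub_div]
  refine ⟨hTend, ?_⟩
  -- nonnegativity of the limit
  refine ge_of_tendsto hTend ?_
  filter_upwards [Ioo_mem_nhdsGT_of_mem (by norm_num : (0:ℝ) ∈ Ico 0 1)] with l hl
  have hf0l := hf0 l hl
  have hm1sum : ∑ x, marg₁ (pl l) x = 1 := by
    rw [← hsuml l, Fintype.sum_prod_type]; rfl
  have hm2sum : ∑ y, marg₂ (pl l) y = 1 := by
    rw [← hsuml l, Fintype.sum_prod_type]
    exact Finset.sum_comm.symm
  have hmi : 0 ≤ miOfJoint (pl l) := by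
    have hrw : miOfJoint (pl l)
        = klDiv (pl l) (fun z : 𝒳₁ × 𝒳₂ => marg₁ (pl l) z.1 * marg₂ (pl l) z.2) := by
      rw [klDiv, Fintype.sum_prod_type]; rfl
    rw [hrw]
    apply klDiv_nonneg
    · exact hf0l
    · intro z
      exact mul_nonneg (Finset.sum_nonneg (fun y _ => hf0l (z.1, y)))
        (Finset.sum_nonneg (fun x _ => hf0l (x, z.2)))
    · rw [hsuml l, Fintype.sum_prod_type]
      have h : ∀ x, ∑ y, marg₁ (pl l) x * marg₂ (pl l) y = marg₁ (pl l) x := by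
        intro x; rw [← Finset.mul_sum, hm2sum, mul_one]
      simp only [h]
      exact hm1sum.symm
    · rintro ⟨x, y⟩ hz
      rcases mul_eq_zero.mp hz with h | h
      · have := (Finset.sum_eq_zero_iff_of_nonneg
          (fun y' _ => hf0l (x, y'))).mp h
        exact this y (Finset.mem_univ y)
      · have := (Finset.sum_eq_zero_iff_of_nonneg
          (fun x' _ => hf0l (x', y))).mp h
        exact this x (Finset.mem_univ x)
  exact div_nonneg hmi (sq_nonneg l)
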